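/- Let (R, α) be a multiplicative Hom-Lie conformal superalgebra. Then GDer(R) = QDer(R) + QC(R); in particular, every homogeneous generalized α^k-derivation D of R can be written as D = (D + D')/2 + (D − D')/2 with (D + D')/2 an α^k-quasiderivation and (D − D')/2 an α^k-quasicentroid, where D' is as in the definition of generalized α^k-derivation. -/

import Mathlib

noncomputable section

namespace HLCS

open scoped BigOperators

/-- Evaluation at `l : ℂ` of a polynomial (in `λ`) with coefficients in `M`,
encoded as a finitely supported family of coefficients. -/
def pev {M : Type} [AddCommGroup M] [Module ℂ M] (l : ℂ) (p : ℕ →₀ M) : M :=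
  p.sum fun n r => l ^ n • r

/-- Evaluation of a polynomial with coefficients in `M` at an operator `T`
(used for substitutions such as `-λ - ∂`). -/
def pevOp {M : Type} [AddCommGroup M] [Module ℂ M] (T : Module.End ℂ M) (p : ℕ →₀ M) : M :=
  p.sum fun n r => (T ^ n) r

/-- The super sign `(-1)^{|a||b|}` attached to parities `i`, `j`. -/
def sg (i j : ZMod 2) : ℂ := (-1 : ℂ) ^ (i * j).val

/-- The data of a `ℤ₂`-graded `ℂ[∂]`-module `R` with an endomorphism `α` and a
`ℂ`-bilinear `λ`-bracket with values in `ℂ[λ] ⊗ R` (encoded by its coefficients). -/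
structure Data (R : Type) [AddCommGroup R] [Module ℂ R] where
  der : Module.End ℂ R
  alpha : Module.End ℂ R
  G : ZMod 2 → Submodule ℂ R
  br : R →ₗ[ℂ] R →ₗ[ℂ] (ℕ →₀ R)

namespace Data

variable {R : Type} [AddCommGroup R] [Module ℂ R] (S : Data R)

/-- `[a_λ b]` evaluated at `λ = l`. -/
def lb (l : ℂ) (a b : R) : R := pev l (S.br a b)

/-- `[a_{-l-∂} b]` : the bracket with `-l - ∂` substituted for `λ`. -/
def lbOp (l : ℂ) (a b : R) : R :=
  pevOp ((-l) • (1 : Module.End ℂ R) - S.der) (S.br a b)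

/-- Multiplicativity: `α [a_λ b] = [α(a)_λ α(b)]`. -/
def Mult : Prop := ∀ (l : ℂ) (a b : R), S.alpha (S.lb l a b) = S.lb l (S.alpha a) (S.alpha b)

end Data

variable {R : Type} [AddCommGroup R] [Module ℂ R]

/-- `(R, α)` with the given data is a Hom-Lie conformal superalgebra.
All polynomial identities in `λ, μ` are stated by evaluating at arbitrary
complex numbers (which is equivalent, `ℂ` being infinite). -/
structure IsHLCS (S : Data R) : Prop where
  internal : DirectSum.IsInternal S.G
  der_even : ∀ i, ∀ a ∈ S.G i, S.der a ∈ S.G i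
  alpha_even : ∀ i, ∀ a ∈ S.G i, S.alpha a ∈ S.G i
  alpha_der : ∀ a, S.alpha (S.der a) = S.der (S.alpha a)
  br_grade : ∀ i j, ∀ a ∈ S.G i, ∀ b ∈ S.G j, ∀ n, S.br a b n ∈ S.G (i + j)
  conf_left : ∀ (l : ℂ) (a b : R), S.lb l (S.der a) b = -l • S.lb l a b
  conf_right : ∀ (l : ℂ) (a b : R), S.lb l a (S.der b) = S.der (S.lb l a b) + l • S.lb l a b
  skew : ∀ i j, ∀ a ∈ S.G i, ∀ b ∈ S.G j, ∀ l : ℂ,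
    S.lb l a b = (-sg i j) • S.lbOp l b a
  jacobi : ∀ i j, ∀ a ∈ S.G i, ∀ b ∈ S.G j, ∀ (c : R) (l m : ℂ),
    S.lb l (S.alpha a) (S.lb m b c) =
      S.lb (l + m) (S.lb l a b) (S.alpha c) + sg i j • S.lb m (S.alpha b) (S.lb l a c)

end HLCS
namespace HLCS

variable {R : Type} [AddCommGroup R] [Module ℂ R]

/-- A homogeneous conformal linear map of parity `d` on `R`, encoded as the family of
its evaluations `F l : R → R` (`l : ℂ`): it is `ℂ`-linear, polynomial in `l`, and
satisfies `F_λ(∂a) = (∂ + λ) F_λ(a)`. -/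
structure IsConfMap (S : Data R) (d : ZMod 2) (F : ℂ → R → R) : Prop where
  map_add : ∀ (l : ℂ) (a b : R), F l (a + b) = F l a + F l b
  map_smul : ∀ (l c : ℂ) (a : R), F l (c • a) = c • F l a
  poly : ∀ a : R, ∃ p : ℕ →₀ R, ∀ l : ℂ, F l a = pev l p
  conf : ∀ (l : ℂ) (a : R), F l (S.der a) = S.der (F l a) + l • F l a
  grade : ∀ i, ∀ a ∈ S.G i, ∀ l : ℂ, F l a ∈ S.G (i + d)

/-- Membership in `Ω`: a homogeneous conformal linear map commuting with `α`. -/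
def InOmega (S : Data R) (d : ZMod 2) (F : ℂ → R → R) : Prop :=
  IsConfMap S d F ∧ ∀ (l : ℂ) (a : R), F l (S.alpha a) = S.alpha (F l a)

/-- An `α^k`-derivation of parity `d`. -/
def IsDer (S : Data R) (k : ℕ) (d : ZMod 2) (F : ℂ → R → R) : Prop :=
  InOmega S d F ∧ ∀ i, ∀ a ∈ S.G i, ∀ (b : R) (l m : ℂ),
    F l (S.lb m a b) =
      S.lb (l + m) (F l a) ((S.alpha ^ k) b) +
        ((-1 : ℂ) ^ ((i * d).val)) • S.lb m ((S.alpha ^ k) a) (F l b)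

/-- The commutator `[D_λ D']_μ (a) = D_λ(D'_{μ-λ}(a)) - (-1)^{|D||D'|} D'_{μ-λ}(D_λ(a))`,
with `e = (-1)^{|D||D'|}`; first argument `l` is `λ`, second `m` is `μ`. -/
def brkt (e : ℂ) (F G : ℂ → R → R) : ℂ → ℂ → R → R :=
  fun l m a => F l (G (m - l) a) - e • G (m - l) (F l a)

/-- The twist `α'(D) = D ∘ α`. -/
def tw (S : Data R) (F : ℂ → R → R) : ℂ → R → R := fun l a => F l (S.alpha a)

/-- A generalized `α^k`-derivation of parity `d`. -/
def IsGDer (S : Data R) (k : ℕ) (d : ZMod 2) (F : ℂ → R → R) : Prop :=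
  InOmega S d F ∧ ∃ F' F'' : ℂ → R → R, InOmega S d F' ∧ InOmega S d F'' ∧
    ∀ i, ∀ a ∈ S.G i, ∀ (b : R) (l m : ℂ),
      S.lb (l + m) (F m a) ((S.alpha ^ k) b) +
        ((-1 : ℂ) ^ ((d * i).val)) • S.lb l ((S.alpha ^ k) a) (F' m b) = F'' m (S.lb l a b)

/-- An `α^k`-quasiderivation of parity `d`. -/
def IsQDer (S : Data R) (k : ℕ) (d : ZMod 2) (F : ℂ → R → R) : Prop :=
  InOmega S d F ∧ ∃ F' : ℂ → R → R, InOmega S d F' ∧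
    ∀ i, ∀ a ∈ S.G i, ∀ (b : R) (l m : ℂ),
      S.lb (l + m) (F m a) ((S.alpha ^ k) b) +
        ((-1 : ℂ) ^ ((d * i).val)) • S.lb l ((S.alpha ^ k) a) (F m b) = F' m (S.lb l a b)

/-- An `α^k`-centroid of parity `d`. -/
def IsCent (S : Data R) (k : ℕ) (d : ZMod 2) (F : ℂ → R → R) : Prop :=
  InOmega S d F ∧ ∀ i, ∀ a ∈ S.G i, ∀ (b : R) (l m : ℂ),
    S.lb (l + m) (F m a) ((S.alpha ^ k) b) =
      ((-1 : ℂ) ^ ((d * i).val)) • S.lb l ((S.alpha ^ k) a) (F m b) ∧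
    S.lb (l + m) (F m a) ((S.alpha ^ k) b) = F m (S.lb l a b)

/-- An `α^k`-quasicentroid of parity `d`. -/
def IsQC (S : Data R) (k : ℕ) (d : ZMod 2) (F : ℂ → R → R) : Prop :=
  InOmega S d F ∧ ∀ i, ∀ a ∈ S.G i, ∀ (b : R) (l m : ℂ),
    S.lb (l + m) (F m a) ((S.alpha ^ k) b) =
      ((-1 : ℂ) ^ ((d * i).val)) • S.lb l ((S.alpha ^ k) a) (F m b)

/-- An `α^k`-central derivation of parity `d`. -/
def IsZDer (S : Data R) (k : ℕ) (d : ZMod 2) (F : ℂ → R → R) : Prop :=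
  InOmega S d F ∧ ∀ (a b : R) (l m : ℂ),
    S.lb (l + m) (F m a) ((S.alpha ^ k) b) = 0 ∧ F m (S.lb l a b) = 0

/-- Membership in the center `Z(R)`. -/
def IsCentral (S : Data R) (x : R) : Prop := ∀ (l : ℂ) (y : R), S.lb l x y = 0

end HLCS
namespace HLCS

variable {R : Type} [AddCommGroup R] [Module ℂ R]

section PolyLemmas
variable {R : Type} [AddCommGroup R] [Module ℂ R]

def pevL (l : ℂ) : (ℕ →₀ R) →ₗ[ℂ] R :=
  Finsupp.lsum ℂ fun n => (l ^ n) • (LinearMap.id : R →ₗ[ℂ] R)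

def pevOpL (T : Module.End ℂ R) : (ℕ →₀ R) →ₗ[ℂ] R :=
  Finsupp.lsum ℂ fun n => (T ^ n : Module.End ℂ R)

lemma pev_eq (l : ℂ) (p : ℕ →₀ R) : pev l p = pevL l p := by
  simp [pev, pevL, Finsupp.lsum_apply, Finsupp.sum]

lemma pevOp_eq (T : Module.End ℂ R) (p : ℕ →₀ R) : pevOp T p = pevOpL T p := by
  simp [pevOp, pevOpL, Finsupp.lsum_apply]

lemma pevL_single (l : ℂ) (n : ℕ) (r : R) : pevL l (Finsupp.single n r) = l ^ n • r := by
  simp [pevL]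

lemma pevOpL_single (T : Module.End ℂ R) (n : ℕ) (r : R) :
    pevOpL T (Finsupp.single n r) = (T ^ n) r := by
  simp [pevOpL]

lemma pev_add (l : ℂ) (p q : ℕ →₀ R) : pev l (p + q) = pev l p + pev l q := by
  simp only [pev_eq, map_add]

lemma pev_smul (l c : ℂ) (p : ℕ →₀ R) : pev l (c • p) = c • pev l p := by
  simp only [pev_eq, map_smul]

lemma pev_zero' (l : ℂ) : pev l (0 : ℕ →₀ R) = 0 := by simp only [pev_eq, map_zero]

lemma pev_single (l : ℂ) (n : ℕ) (r : R) : pev l (Finsupp.single n r) = l ^ n • r := by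
  rw [pev_eq, pevL_single]

lemma pev_sum (l : ℂ) {ι : Type} (s : Finset ι) (f : ι → (ℕ →₀ R)) :
    pev l (∑ x ∈ s, f x) = ∑ x ∈ s, pev l (f x) := by simp only [pev_eq, map_sum]

lemma pevOp_add (T : Module.End ℂ R) (p q : ℕ →₀ R) :
    pevOp T (p + q) = pevOp T p + pevOp T q := by simp only [pevOp_eq, map_add]

lemma pevOp_smul (T : Module.End ℂ R) (c : ℂ) (p : ℕ →₀ R) :
    pevOp T (c • p) = c • pevOp T p := by simp only [pevOp_eq, map_smul]

lemma pevOp_single (T : Module.End ℂ R) (n : ℕ) (r : R) :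
    pevOp T (Finsupp.single n r) = (T ^ n) r := by rw [pevOp_eq, pevOpL_single]

lemma pevOp_sum (T : Module.End ℂ R) {ι : Type} (s : Finset ι) (f : ι → (ℕ →₀ R)) :
    pevOp T (∑ x ∈ s, f x) = ∑ x ∈ s, pevOp T (f x) := by simp only [pevOp_eq, map_sum]

/-- Coefficient extraction: if a polynomial vanishes at every complex point, it is zero. -/
lemma pev_eq_zero_of_forall {p : ℕ →₀ R} (h : ∀ l : ℂ, pev l p = 0) : p = 0 := by
  ext n
  show p n = 0
  rw [← (Module.forall_dual_apply_eq_zero_iff ℂ (p n))]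
  intro φ
  set P : Polynomial ℂ := p.sum fun n r => Polynomial.monomial n (φ r) with hP
  have hev : ∀ l : ℂ, P.eval l = 0 := by
    intro l
    have h1 : φ (pev l p) = 0 := by rw [h l, map_zero]
    rw [pev] at h1
    rw [map_finsuppSum] at h1
    have : Polynomial.eval l P = Polynomial.leval l P := rfl
    rw [this, hP, map_finsuppSum]
    simpa [Polynomial.leval_apply, Polynomial.eval_monomial, mul_comm] using h1
  have hP0 : P = 0 := by
    apply Polynomial.funext; intro x; simp [hev x]
  have hco := congrArg (fun q => Polynomial.coeff q n) hP0
  simp only [Polynomial.coeff_zero] at hco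
  have : (p.sum fun m r => (Polynomial.monomial m) (φ r)).coeff n
      = p.sum fun m r => ((Polynomial.monomial m) (φ r)).coeff n := by
    exact map_finsuppSum (Polynomial.lcoeff ℂ n) p (fun m r => Polynomial.monomial m (φ r))
  rw [this] at hco
  simp only [Polynomial.coeff_monomial] at hco
  rw [Finsupp.sum_ite_eq' p n (fun _ r => φ r)] at hco
  by_cases hn : n ∈ p.support
  · rwa [if_pos hn] at hco
  · rw [Finsupp.notMem_support_iff] at hn
    simp [hn]


lemma pev_ext {p q : ℕ →₀ R} (h : ∀ l : ℂ, pev l p = pev l q) : p = q := by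
  have : p - q = 0 := by
    apply pev_eq_zero_of_forall
    intro l
    rw [pev_eq, map_sub, ← pev_eq, ← pev_eq, h l, sub_self]
  exact sub_eq_zero.mp this

/-- Shift lemma: substituting `l + c` for `l` corresponds to a new coefficient family,
compatibly with operator substitution. -/
lemma shift_exists (c : ℂ) (p : ℕ →₀ R) :
    ∃ q : ℕ →₀ R, (∀ l : ℂ, pev l q = pev (l + c) p) ∧
      (∀ T : Module.End ℂ R, pevOp T q = pevOp (c • 1 + T) p) := by
  induction p using Finsupp.induction with
  | zero => exact ⟨0, by intro l; simp [pev], by intro T; simp [pevOp]⟩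
  | single_add n r f hn hr ih =>
    obtain ⟨q, hq1, hq2⟩ := ih
    refine ⟨(∑ k ∈ Finset.range (n + 1),
        Finsupp.single k (((n.choose k : ℂ) * c ^ (n - k)) • r)) + q, ?_, ?_⟩
    · intro l
      have h1 : pev l (∑ k ∈ Finset.range (n + 1),
          Finsupp.single k (((n.choose k : ℂ) * c ^ (n - k)) • r)) = ((l + c) ^ n) • r := by
        rw [pev_sum]
        simp only [pev_single]
        rw [add_pow, Finset.sum_smul]
        apply Finset.sum_congr rfl
        intro k hk
        rw [smul_smul]
        congr 1
        ring
      rw [pev_add, pev_add, hq1, pev_single, h1]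
    · intro T
      have h1 : pevOp T (∑ k ∈ Finset.range (n + 1),
          Finsupp.single k (((n.choose k : ℂ) * c ^ (n - k)) • r)) = ((c • 1 + T) ^ n) r := by
        rw [pevOp_sum]
        simp only [pevOp_single]
        have hc : Commute T (c • (1 : Module.End ℂ R)) := (Commute.one_right T).smul_right c
        rw [add_comm (c • (1 : Module.End ℂ R)) T, hc.add_pow, LinearMap.sum_apply]
        apply Finset.sum_congr rfl
        intro k hk
        rw [Module.End.mul_apply, Module.End.mul_apply]
        simp only [smul_pow, one_pow, LinearMap.smul_apply, Module.End.one_apply,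
          Module.End.natCast_apply, ← smul_smul, mul_smul]
        rw [Nat.cast_smul_eq_nsmul ℂ, smul_comm]
      rw [pevOp_add, pevOp_add, hq2, pevOp_single, h1]

/-- If `g` intertwines `S₀` and `T` then it intertwines their polynomial evaluations. -/
lemma pevOp_comm (g : R →ₗ[ℂ] R) (S₀ T : Module.End ℂ R)
    (h : ∀ r, g (S₀ r) = T (g r)) (p : ℕ →₀ R) :
    g (pevOp S₀ p) = pevOp T (p.mapRange g (map_zero g)) := by
  have hpow : ∀ (n : ℕ) (r : R), g ((S₀ ^ n) r) = (T ^ n) (g r) := by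
    intro n
    induction n with
    | zero => simp
    | succ n ih =>
      intro r
      rw [pow_succ, pow_succ, Module.End.mul_apply, Module.End.mul_apply, ih (S₀ r), h r]
  rw [pevOp, map_finsuppSum, pevOp, Finsupp.sum_mapRange_index (by simp)]
  exact Finsupp.sum_congr fun n _ => hpow n (p n)

lemma pev_mapRange (g : R →ₗ[ℂ] R) (l : ℂ) (p : ℕ →₀ R) :
    g (pev l p) = pev l (p.mapRange g (map_zero g)) := by
  rw [pev, map_finsuppSum, pev, Finsupp.sum_mapRange_index (by simp)]
  exact Finsupp.sum_congr fun n _ => (map_smul g _ _)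


end PolyLemmas


section SignLemmas

lemma zmod2_cases : ∀ x : ZMod 2, x = 0 ∨ x = 1 := by decide

lemma sg_signs (d i j : ZMod 2) :
    ((-sg i j) * (-sg i (j + d)) = (-1 : ℂ) ^ ((d * i).val)) ∧
    ((-sg i j) * (((-1 : ℂ) ^ ((d * j).val)) * (-sg (i + d) j)) = 1) ∧
    ((-sg i j) * (-sg i j) = 1) := by
  rcases zmod2_cases d with rfl | rfl <;> rcases zmod2_cases i with rfl | rfl <;>
    rcases zmod2_cases j with rfl | rfl <;>
    norm_num [sg, show ZMod.val (1 : ZMod 2) = 1 from rfl, show ZMod.val (2 : ZMod 2) = 0 from rfl]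

end SignLemmas

section BasicLemmas
variable {R : Type} [AddCommGroup R] [Module ℂ R] (S : Data R)

lemma lb_add_right (l : ℂ) (a x y : R) : S.lb l a (x + y) = S.lb l a x + S.lb l a y := by
  rw [Data.lb, Data.lb, Data.lb, map_add, pev_add]

lemma lb_smul_right (l : ℂ) (a : R) (c : ℂ) (x : R) : S.lb l a (c • x) = c • S.lb l a x := by
  rw [Data.lb, Data.lb, map_smul, pev_smul]

lemma lb_zero_right (l : ℂ) (a : R) : S.lb l a 0 = 0 := by
  rw [Data.lb, map_zero, pev_zero']

lemma lb_add_left (l : ℂ) (x y b : R) : S.lb l (x + y) b = S.lb l x b + S.lb l y b := by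
  rw [Data.lb, Data.lb, Data.lb, map_add, LinearMap.add_apply, pev_add]

lemma lb_smul_left (l : ℂ) (c : ℂ) (x b : R) : S.lb l (c • x) b = c • S.lb l x b := by
  rw [Data.lb, Data.lb, map_smul, LinearMap.smul_apply, pev_smul]

lemma lb_zero_left (l : ℂ) (b : R) : S.lb l 0 b = 0 := by
  rw [Data.lb, map_zero, LinearMap.zero_apply, pev_zero']

lemma lb_sub_right (l : ℂ) (a x y : R) : S.lb l a (x - y) = S.lb l a x - S.lb l a y := by
  rw [Data.lb, Data.lb, Data.lb, map_sub, pev_eq, map_sub, ← pev_eq, ← pev_eq]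

lemma lb_sub_left (l : ℂ) (x y b : R) : S.lb l (x - y) b = S.lb l x b - S.lb l y b := by
  rw [Data.lb, Data.lb, Data.lb, map_sub, LinearMap.sub_apply, pev_eq, map_sub, ← pev_eq, ← pev_eq]

lemma alpha_pow_mem (hS : IsHLCS S) (k : ℕ) (i : ZMod 2) :
    ∀ a ∈ S.G i, (S.alpha ^ k) a ∈ S.G i := by
  induction k with
  | zero => intro a ha; simpa using ha
  | succ k ih =>
    intro a ha
    rw [pow_succ', Module.End.mul_apply]
    exact hS.alpha_even i _ (ih a ha)

lemma confmap_zero {d : ZMod 2} {F : ℂ → R → R} (hF : IsConfMap S d F) (l : ℂ) :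
    F l 0 = 0 := by
  have := hF.map_smul l 0 0
  simpa using this

lemma inOmega_add {d : ZMod 2} {F G : ℂ → R → R} (hF : InOmega S d F) (hG : InOmega S d G) :
    InOmega S d (fun l a => F l a + G l a) := by
  obtain ⟨hF1, hF2⟩ := hF
  obtain ⟨hG1, hG2⟩ := hG
  refine ⟨⟨?_, ?_, ?_, ?_, ?_⟩, ?_⟩
  · intro l a b; rw [hF1.map_add, hG1.map_add]; abel
  · intro l c a; rw [hF1.map_smul, hG1.map_smul, smul_add]
  · intro a
    obtain ⟨p, hp⟩ := hF1.poly a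
    obtain ⟨q, hq⟩ := hG1.poly a
    exact ⟨p + q, fun l => by rw [pev_add, hp, hq]⟩
  · intro l a; rw [hF1.conf, hG1.conf, map_add, smul_add]; abel
  · intro i a ha l
    exact (S.G (i + d)).add_mem (hF1.grade i a ha l) (hG1.grade i a ha l)
  · intro l a; show F l (S.alpha a) + G l (S.alpha a) = _; rw [hF2, hG2, map_add]

lemma inOmega_smul (c : ℂ) {d : ZMod 2} {F : ℂ → R → R} (hF : InOmega S d F) :
    InOmega S d (fun l a => c • F l a) := by
  obtain ⟨hF1, hF2⟩ := hF
  refine ⟨⟨?_, ?_, ?_, ?_, ?_⟩, ?_⟩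
  · intro l a b; rw [hF1.map_add, smul_add]
  · intro l e a; rw [hF1.map_smul, smul_comm]
  · intro a
    obtain ⟨p, hp⟩ := hF1.poly a
    exact ⟨c • p, fun l => by rw [pev_smul, hp]⟩
  · intro l a; rw [hF1.conf, smul_add, smul_comm c l, map_smul]
  · intro i a ha l
    exact (S.G (i + d)).smul_mem c (hF1.grade i a ha l)
  · intro l a; show c • F l (S.alpha a) = _; rw [hF2, map_smul]

lemma inOmega_sub {d : ZMod 2} {F G : ℂ → R → R} (hF : InOmega S d F) (hG : InOmega S d G) :
    InOmega S d (fun l a => F l a - G l a) := by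
  obtain ⟨hF1, hF2⟩ := hF
  obtain ⟨hG1, hG2⟩ := hG
  refine ⟨⟨?_, ?_, ?_, ?_, ?_⟩, ?_⟩
  · intro l a b; rw [hF1.map_add, hG1.map_add]; abel
  · intro l c a; rw [hF1.map_smul, hG1.map_smul, smul_sub]
  · intro a
    obtain ⟨p, hp⟩ := hF1.poly a
    obtain ⟨q, hq⟩ := hG1.poly a
    refine ⟨p - q, fun l => ?_⟩
    rw [pev_eq, map_sub, ← pev_eq, ← pev_eq, hp, hq]
  · intro l a; rw [hF1.conf, hG1.conf, map_sub, smul_sub]; abel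
  · intro i a ha l
    exact (S.G (i + d)).sub_mem (hF1.grade i a ha l) (hG1.grade i a ha l)
  · intro l a; show F l (S.alpha a) - G l (S.alpha a) = _; rw [hF2, hG2, map_sub]

end BasicLemmas


section Star
variable {R : Type} [AddCommGroup R] [Module ℂ R] {S : Data R}

lemma sg_signs' (d i j : ZMod 2) :
    ((-1 : ℂ) ^ ((d * i).val) * (-sg i (j + d)) = -sg i j) ∧
    (-sg (i + d) j = (-sg i j) * ((-1 : ℂ) ^ ((d * j).val))) := by
  rcases zmod2_cases d with rfl | rfl <;> rcases zmod2_cases i with rfl | rfl <;>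
    rcases zmod2_cases j with rfl | rfl <;>
    norm_num [sg, show ZMod.val (1 : ZMod 2) = 1 from rfl, show ZMod.val (2 : ZMod 2) = 0 from rfl]

lemma star_swap (hS : IsHLCS S) {k : ℕ} {d : ZMod 2} {F F' F'' : ℂ → R → R}
    (hF : InOmega S d F) (hF' : InOmega S d F') (hF'' : InOmega S d F'')
    (hyp : ∀ i, ∀ a ∈ S.G i, ∀ (b : R) (l m : ℂ),
      S.lb (l + m) (F m a) ((S.alpha ^ k) b) +
        ((-1 : ℂ) ^ ((d * i).val)) • S.lb l ((S.alpha ^ k) a) (F' m b) = F'' m (S.lb l a b)) :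
    ∀ i, ∀ a ∈ S.G i, ∀ (b : R) (l m : ℂ),
      S.lb (l + m) (F' m a) ((S.alpha ^ k) b) +
        ((-1 : ℂ) ^ ((d * i).val)) • S.lb l ((S.alpha ^ k) a) (F m b) = F'' m (S.lb l a b) := by
  intro i a ha b l m
  have key : ∀ j, ∀ b ∈ S.G j,
      S.lb (l + m) (F' m a) ((S.alpha ^ k) b) +
        ((-1 : ℂ) ^ ((d * i).val)) • S.lb l ((S.alpha ^ k) a) (F m b) = F'' m (S.lb l a b) := by
    intro j b hb
    set g : R →ₗ[ℂ] R :=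
      { toFun := F'' m,
        map_add' := fun x y => hF''.1.map_add m x y,
        map_smul' := fun c x => hF''.1.map_smul m c x } with hg
    have g_apply : ∀ x : R, g x = F'' m x := fun _ => rfl
    obtain ⟨q, hq1, hq2⟩ := shift_exists m (S.br (F m b) ((S.alpha ^ k) a))
    have hcoeff : q + ((-1 : ℂ) ^ ((d * j).val)) • (S.br ((S.alpha ^ k) b) (F' m a)) =
        Finsupp.mapRange g (map_zero g) (S.br b a) := by
      apply pev_ext
      intro ν
      rw [pev_add, pev_smul, hq1 ν, ← pev_mapRange g ν (S.br b a), g_apply]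
      exact hyp j b hb a ν m
    have hcomm : ∀ r : R, g (((-l) • (1 : Module.End ℂ R) - S.der) r) =
        (((-(l + m)) • (1 : Module.End ℂ R) - S.der) (g r)) := by
      intro r
      have e1 : (((-l) • (1 : Module.End ℂ R)) - S.der) r = (-l) • r - S.der r := by
        simp [LinearMap.sub_apply]
      have e2 : ((-(l + m)) • (1 : Module.End ℂ R) - S.der) (g r) =
          (-(l + m)) • g r - S.der (g r) := by simp [LinearMap.sub_apply]
      rw [e1, e2, map_sub, map_smul, g_apply, g_apply, hF''.1.conf m r,
        show (-(l + m)) = (-l) + (-m) by ring, add_smul]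
      module
    have hT : m • (1 : Module.End ℂ R) + ((-(l + m)) • (1 : Module.End ℂ R) - S.der) =
        (-l) • (1 : Module.End ℂ R) - S.der := by
      rw [← add_sub_assoc, ← add_smul]
      congr 2
      ring
    have hop : S.lbOp l (F m b) ((S.alpha ^ k) a) +
        ((-1 : ℂ) ^ ((d * j).val)) • S.lbOp (l + m) ((S.alpha ^ k) b) (F' m a) =
        F'' m (S.lbOp l b a) := by
      have h1 := congrArg (pevOp ((-(l + m)) • (1 : Module.End ℂ R) - S.der)) hcoeff
      rw [pevOp_add, pevOp_smul, hq2, hT,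
        ← pevOp_comm g ((-l) • (1 : Module.End ℂ R) - S.der)
          ((-(l + m)) • (1 : Module.End ℂ R) - S.der) hcomm (S.br b a)] at h1
      exact h1
    have hsk1 := hS.skew i (j + d) ((S.alpha ^ k) a) (alpha_pow_mem S hS k i a ha)
      (F m b) (hF.1.grade j b hb m) l
    have hsk2 := hS.skew (i + d) j (F' m a) (hF'.1.grade i a ha m)
      ((S.alpha ^ k) b) (alpha_pow_mem S hS k j b hb) (l + m)
    have hsk3 := hS.skew i j a ha b hb l
    rw [hsk1, hsk2, hsk3, hF''.1.map_smul, ← hop, smul_smul,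
      (sg_signs' d i j).1, (sg_signs' d i j).2, smul_add, smul_smul]
    exact add_comm _ _
  have hbtop : b ∈ iSup S.G := by
    rw [hS.internal.submodule_iSup_eq_top]; trivial
  refine Submodule.iSup_induction S.G
    (motive := fun b => S.lb (l + m) (F' m a) ((S.alpha ^ k) b) +
      ((-1 : ℂ) ^ ((d * i).val)) • S.lb l ((S.alpha ^ k) a) (F m b) = F'' m (S.lb l a b))
    hbtop key ?_ ?_
  · beta_reduce
    rw [map_zero, lb_zero_right, lb_zero_right, confmap_zero S hF.1 m, lb_zero_right,
      confmap_zero S hF''.1 m, smul_zero, add_zero]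
  · intro x y hx hy
    beta_reduce at hx hy ⊢
    rw [map_add, lb_add_right, hF.1.map_add, lb_add_right, lb_add_right, hF''.1.map_add,
      smul_add]
    rw [← hx, ← hy]
    abel

end Star

/-- For a multiplicative Hom-Lie conformal superalgebra `(R, α)`,
`GDer(R) = QDer(R) + QC(R)`: every homogeneous generalized `α^k`-derivation is a sum
of an `α^k`-quasiderivation and an `α^k`-quasicentroid, and conversely any such sum
is a generalized `α^k`-derivation; in particular, if `D', D''` witness that `D` is a
generalized `α^k`-derivation, then `(D + D')/2` is an `α^k`-quasiderivation and
`(D - D')/2` is an `α^k`-quasicentroid. -/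
theorem gder_eq_qder_add_qc (S : Data R) (hS : IsHLCS S) (hmult : S.Mult) :
    (∀ (k : ℕ) (d : ZMod 2) (F : ℂ → R → R), IsGDer S k d F →
      ∃ Q C : ℂ → R → R, IsQDer S k d Q ∧ IsQC S k d C ∧
        ∀ (l : ℂ) (a : R), F l a = Q l a + C l a) ∧
    (∀ (k : ℕ) (d : ZMod 2) (Q C : ℂ → R → R), IsQDer S k d Q → IsQC S k d C →
      IsGDer S k d (fun l a => Q l a + C l a)) ∧
    (∀ (k : ℕ) (d : ZMod 2) (F F' F'' : ℂ → R → R),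
      InOmega S d F → InOmega S d F' → InOmega S d F'' →
      (∀ i, ∀ a ∈ S.G i, ∀ (b : R) (l m : ℂ),
        S.lb (l + m) (F m a) ((S.alpha ^ k) b) +
          ((-1 : ℂ) ^ ((d * i).val)) • S.lb l ((S.alpha ^ k) a) (F' m b) =
            F'' m (S.lb l a b)) →
      IsQDer S k d (fun l a => (2 : ℂ)⁻¹ • (F l a + F' l a)) ∧
        IsQC S k d (fun l a => (2 : ℂ)⁻¹ • (F l a - F' l a))) := by
  have part3 : ∀ (k : ℕ) (d : ZMod 2) (F F' F'' : ℂ → R → R),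
      InOmega S d F → InOmega S d F' → InOmega S d F'' →
      (∀ i, ∀ a ∈ S.G i, ∀ (b : R) (l m : ℂ),
        S.lb (l + m) (F m a) ((S.alpha ^ k) b) +
          ((-1 : ℂ) ^ ((d * i).val)) • S.lb l ((S.alpha ^ k) a) (F' m b) =
            F'' m (S.lb l a b)) →
      IsQDer S k d (fun l a => (2 : ℂ)⁻¹ • (F l a + F' l a)) ∧
        IsQC S k d (fun l a => (2 : ℂ)⁻¹ • (F l a - F' l a)) := by
    intro k d F F' F'' hF hF' hF'' hyp
    have star' := star_swap hS hF hF' hF'' hyp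
    constructor
    · refine ⟨inOmega_smul S (2 : ℂ)⁻¹ (inOmega_add S hF hF'), F'', hF'', ?_⟩
      intro i a ha b l m
      beta_reduce
      rw [lb_smul_left, lb_add_left, lb_smul_right, lb_add_right]
      rw [smul_comm ((-1 : ℂ) ^ ((d * i).val)) ((2 : ℂ)⁻¹), ← smul_add]
      have hsum : (S.lb (l + m) (F m a) ((S.alpha ^ k) b) +
            S.lb (l + m) (F' m a) ((S.alpha ^ k) b)) +
          ((-1 : ℂ) ^ ((d * i).val)) • (S.lb l ((S.alpha ^ k) a) (F m b) +
            S.lb l ((S.alpha ^ k) a) (F' m b)) =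
          F'' m (S.lb l a b) + F'' m (S.lb l a b) := by
        have h1 := hyp i a ha b l m
        have h2 := star' i a ha b l m
        rw [smul_add]
        nth_rewrite 1 [← h1]
        rw [← h2]
        abel
      rw [hsum, ← two_smul ℂ (F'' m (S.lb l a b)), smul_smul]
      norm_num
    · refine ⟨inOmega_smul S (2 : ℂ)⁻¹ (inOmega_sub S hF hF'), ?_⟩
      intro i a ha b l m
      beta_reduce
      rw [lb_smul_left, lb_sub_left, lb_smul_right, lb_sub_right]
      have key : S.lb (l + m) (F m a) ((S.alpha ^ k) b) -
            S.lb (l + m) (F' m a) ((S.alpha ^ k) b) =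
          ((-1 : ℂ) ^ ((d * i).val)) • S.lb l ((S.alpha ^ k) a) (F m b) -
            ((-1 : ℂ) ^ ((d * i).val)) • S.lb l ((S.alpha ^ k) a) (F' m b) := by
        apply sub_eq_sub_iff_add_eq_add.mpr
        rw [(hyp i a ha b l m).trans (star' i a ha b l m).symm]
        exact add_comm _ _
      rw [key, smul_comm]
      simp [smul_sub]
  refine ⟨?_, ?_, part3⟩
  · intro k d F hGD
    obtain ⟨hF, F', F'', hF', hF'', hyp⟩ := hGD
    obtain ⟨hQ, hC⟩ := part3 k d F F' F'' hF hF' hF'' hyp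
    refine ⟨_, _, hQ, hC, ?_⟩
    intro l a
    rw [← smul_add,
      show (F l a + F' l a) + (F l a - F' l a) = (2 : ℂ) • F l a by rw [two_smul]; abel,
      smul_smul]
    norm_num
  · intro k d Q C hQ hC
    obtain ⟨hQΩ, Q', hQ'Ω, hQid⟩ := hQ
    obtain ⟨hCΩ, hCid⟩ := hC
    refine ⟨inOmega_add S hQΩ hCΩ, fun l a => Q l a - C l a, Q',
      inOmega_sub S hQΩ hCΩ, hQ'Ω, ?_⟩
    intro i a ha b l m
    beta_reduce
    rw [lb_add_left, lb_sub_right, smul_sub, ← hQid i a ha b l m, hCid i a ha b l m]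
    abel

end HLCS
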